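/- Let A be a binary linear code of even length n such that every codeword of the dual code A⊥ has weight divisible by 4 (i.e., A⊥ is doubly even). Then for every vector a not in A, the coset A + a contains strictly fewer words of weight n/2 than A itself does. -/
import Mathlib

/-- Hamming weight of a vector in F₂ⁿ. -/
def wt {n : ℕ} (v : Fin n → ZMod 2) : ℕ :=
  (Finset.univ.filter fun j => v j ≠ 0).card

/-- Dual code: vectors orthogonal to every codeword. -/
def dualSet {n : ℕ} (A : Submodule (ZMod 2) (Fin n → ZMod 2)) : Set (Fin n → ZMod 2) :=
  {u | ∀ c ∈ A, ∑ j, u j * c j = 0}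

namespace CFB

open Finset

variable {n : ℕ}

/-- sign character -/
def eps (x : ZMod 2) : ℤ := if x = 0 then 1 else -1

lemma eps_add : ∀ x y : ZMod 2, eps (x + y) = eps x * eps y := by decide

lemma eps_zero : eps 0 = 1 := rfl

lemma eps_add_one : ∀ x : ZMod 2, eps (x + 1) = - eps x := by decide

lemma zmod2_ne_zero : ∀ x : ZMod 2, x ≠ 0 → x = 1 := by decide

lemma zmod2_eq_one_of_ne_zero {x : ZMod 2} (h : x ≠ 0) : x = 1 := zmod2_ne_zero x h

lemma eps_natCast (c : ℕ) : eps (c : ZMod 2) = (-1) ^ c := by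
  induction c with
  | zero => simp [eps_zero]
  | succ k ih => push_cast; rw [eps_add_one, ih]; ring

/-- inner product -/
def ip (u v : Fin n → ZMod 2) : ZMod 2 := ∑ j, u j * v j

lemma ip_comm (u v : Fin n → ZMod 2) : ip u v = ip v u := by
  unfold ip; exact Finset.sum_congr rfl fun j _ => mul_comm _ _

lemma ip_add_right (u v w : Fin n → ZMod 2) : ip u (v + w) = ip u v + ip u w := by
  unfold ip; rw [← Finset.sum_add_distrib]
  exact Finset.sum_congr rfl fun j _ => by simp [mul_add]

def supp (v : Fin n → ZMod 2) : Finset (Fin n) := Finset.univ.filter fun j => v j ≠ 0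

lemma wt_eq_card_supp (v : Fin n → ZMod 2) : wt v = (supp v).card := rfl

def ind (s : Finset (Fin n)) : Fin n → ZMod 2 := fun j => if j ∈ s then 1 else 0

lemma supp_ind (s : Finset (Fin n)) : supp (ind s) = s := by
  ext j; simp [supp, ind]

lemma ind_supp (v : Fin n → ZMod 2) : ind (supp v) = v := by
  funext j
  by_cases h : v j = 0
  · simp [ind, supp, h]
  · simp [ind, supp, h, zmod2_eq_one_of_ne_zero h]

lemma wt_ind (s : Finset (Fin n)) : wt (ind s) = s.card := by
  rw [wt_eq_card_supp, supp_ind]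

lemma wt_le (v : Fin n → ZMod 2) : wt v ≤ n := by
  simpa [wt] using (Finset.card_filter_le Finset.univ fun j => v j ≠ 0)

/-- weight class -/
def W (n k : ℕ) : Finset (Fin n → ZMod 2) := Finset.univ.filter fun v => wt v = k

lemma mem_W {k : ℕ} {v : Fin n → ZMod 2} : v ∈ W n k ↔ wt v = k := by simp [W]

lemma card_W (k : ℕ) : (W n k).card = n.choose k := by
  rw [show n.choose k = ((Finset.univ : Finset (Fin n)).powersetCard k).card by
    rw [Finset.card_powersetCard]; simp]
  apply Finset.card_bij (fun v _ => supp v)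
  · intro v hv
    rw [mem_W] at hv
    simp [Finset.mem_powersetCard, ← wt_eq_card_supp, hv]
  · intro v hv w hw h
    rw [← ind_supp v, ← ind_supp w, h]
  · intro s hs
    refine ⟨ind s, ?_, supp_ind s⟩
    rw [mem_W, wt_ind]
    simpa [Finset.mem_powersetCard] using hs

lemma wt_comp_perm (v : Fin n → ZMod 2) (e : Equiv.Perm (Fin n)) :
    wt (fun j => v (e j)) = wt v := by
  unfold wt
  apply Finset.card_bij (fun j _ => e j)
  · intro j hj; simpa using (by simpa using hj : v (e j) ≠ 0)
  · intro j _ k _ h; exact e.injective h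
  · intro j hj
    exact ⟨e.symm j, by simpa using (by simpa using hj : v j ≠ 0), e.apply_symm_apply j⟩

/-- Two vectors of equal weight differ by a coordinate permutation. -/
lemma exists_perm {u u' : Fin n → ZMod 2} (h : wt u = wt u') :
    ∃ e : Equiv.Perm (Fin n), ∀ j, u (e j) = u' j := by
  classical
  have hcard' : Fintype.card {x // x ∈ supp u'} = Fintype.card {x // x ∈ supp u} := by
    simp only [Fintype.card_coe]
    rw [← wt_eq_card_supp, ← wt_eq_card_supp, h]
  let e1 : {x // x ∈ supp u'} ≃ {x // x ∈ supp u} := Fintype.equivOfCardEq hcard'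
  refine ⟨e1.extendSubtype, fun j => ?_⟩
  by_cases hj : j ∈ supp u'
  · have h1 : e1.extendSubtype j ∈ supp u := e1.extendSubtype_mem j hj
    have h2 : u' j = 1 := zmod2_eq_one_of_ne_zero (by simpa [supp] using hj)
    have h3 : u (e1.extendSubtype j) = 1 := zmod2_eq_one_of_ne_zero (by simpa [supp] using h1)
    rw [h2, h3]
  · have h1 : ¬ e1.extendSubtype j ∈ supp u := e1.extendSubtype_not_mem j hj
    have h2 : u' j = 0 := by simpa [supp] using hj
    have h3 : u (e1.extendSubtype j) = 0 := by simpa [supp] using h1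
    rw [h2, h3]

lemma sum_eps_congr {k : ℕ} {u u' : Fin n → ZMod 2} (h : wt u = wt u') :
    ∑ v ∈ W n k, eps (ip u v) = ∑ v ∈ W n k, eps (ip u' v) := by
  obtain ⟨e, he⟩ := exists_perm h
  refine Finset.sum_nbij' (fun v : Fin n → ZMod 2 => fun j => v (e j))
    (fun v : Fin n → ZMod 2 => fun j => v (e.symm j)) ?_ ?_ ?_ ?_ ?_
  · intro v hv; rw [mem_W] at hv ⊢; rw [wt_comp_perm]; exact hv
  · intro v hv; rw [mem_W] at hv ⊢; rw [wt_comp_perm v e.symm]; exact hv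
  · intro v _; funext x; simp
  · intro v _; funext x; simp
  · intro v _
    congr 1
    unfold ip
    calc ∑ j, u j * v j = ∑ j, u (e j) * v (e j) := (Equiv.sum_comp e fun j => u j * v j).symm
      _ = ∑ j, u' j * ((fun x => v (e x)) j) := Finset.sum_congr rfl fun j _ => by rw [he j]

lemma add_self_eq_zero' (x : Fin n → ZMod 2) : x + x = 0 := by
  funext j; exact CharTwo.add_self_eq_zero _

lemma ip_add_left (u v w : Fin n → ZMod 2) : ip (u + v) w = ip u w + ip v w := by
  rw [ip_comm, ip_add_right, ip_comm w u, ip_comm w v]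

section Dual

variable (A : Submodule (ZMod 2) (Fin n → ZMod 2))

lemma dualSet_zero : (0 : Fin n → ZMod 2) ∈ dualSet A := fun c _ => by simp

lemma dualSet_add {u w : Fin n → ZMod 2} (hu : u ∈ dualSet A) (hw : w ∈ dualSet A) :
    u + w ∈ dualSet A := by
  intro c hc
  simp only [Pi.add_apply, add_mul]
  rw [Finset.sum_add_distrib, hu c hc, hw c hc, add_zero]

lemma ip_dual {u w : Fin n → ZMod 2} (hu : u ∈ dualSet A) (hw : w ∈ A) : ip u w = 0 :=
  hu w hw

lemma exists_dual {w : Fin n → ZMod 2} (hw : w ∉ A) : ∃ u ∈ dualSet A, ip u w = 1 := by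
  classical
  have hQ : (Submodule.Quotient.mk w : (Fin n → ZMod 2) ⧸ A) ≠ 0 := by
    simpa [Submodule.Quotient.mk_eq_zero] using hw
  obtain ⟨f, hf⟩ : ∃ f : Module.Dual (ZMod 2) ((Fin n → ZMod 2) ⧸ A),
      f (Submodule.Quotient.mk w) ≠ 0 := by
    by_contra hcon
    push_neg at hcon
    exact hQ ((Module.forall_dual_apply_eq_zero_iff (ZMod 2) _).mp hcon)
  set g : (Fin n → ZMod 2) →ₗ[ZMod 2] ZMod 2 := f.comp A.mkQ with hg
  have hrep : ∀ v : Fin n → ZMod 2, g v = ∑ j, v j * g (Pi.single j 1) := by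
    intro v
    have hv : v = ∑ j, v j • Pi.single j (1 : ZMod 2) := by
      funext x
      simp [Finset.sum_apply, Pi.single_apply, smul_eq_mul, mul_ite,
        Finset.sum_ite_eq' Finset.univ x]
    conv_lhs => rw [hv]
    rw [map_sum]
    exact Finset.sum_congr rfl fun j _ => by rw [map_smul, smul_eq_mul]
  refine ⟨fun j => g (Pi.single j 1), ?_, ?_⟩
  · intro c hc
    have h0 : g c = 0 := by
      rw [hg]
      simp [Submodule.mkQ_apply, (Submodule.Quotient.mk_eq_zero A).2 hc]
    show ∑ j, g (Pi.single j 1) * c j = 0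
    calc ∑ j, g (Pi.single j 1) * c j = ∑ j, c j * g (Pi.single j 1) :=
          Finset.sum_congr rfl fun j _ => mul_comm _ _
      _ = g c := (hrep c).symm
      _ = 0 := h0
  · have : ip (fun j => g (Pi.single j 1)) w = g w := by
      unfold ip
      rw [hrep w]
      exact Finset.sum_congr rfl fun j _ => mul_comm _ _
    rw [this]
    have : g w ≠ 0 := by simpa [hg, Submodule.mkQ_apply] using hf
    exact zmod2_eq_one_of_ne_zero this

lemma sum_eps_ip_mem (Bf : Finset (Fin n → ZMod 2)) (hBf : ∀ u, u ∈ Bf ↔ u ∈ dualSet A)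
    {w : Fin n → ZMod 2} (hw : w ∈ A) :
    ∑ u ∈ Bf, eps (ip u w) = (Bf.card : ℤ) := by
  rw [Finset.sum_congr rfl (fun u hu => by
    rw [ip_dual A ((hBf u).1 hu) hw, eps_zero])]
  simp

lemma sum_eps_ip_notMem (Bf : Finset (Fin n → ZMod 2)) (hBf : ∀ u, u ∈ Bf ↔ u ∈ dualSet A)
    {w : Fin n → ZMod 2} (hw : w ∉ A) :
    ∑ u ∈ Bf, eps (ip u w) = 0 := by
  obtain ⟨u₀, hu₀, hip₀⟩ := exists_dual A hw
  apply Finset.sum_involution (fun u _ => u + u₀)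
  · intro u _
    rw [ip_add_left, hip₀, eps_add_one]
    ring
  · intro u _ _
    intro hcon
    have hz : u₀ = 0 := by
      have h2 := congrArg (fun x : Fin n → ZMod 2 => x + u) hcon
      calc u₀ = u + u₀ + u := by rw [add_comm u u₀, add_assoc, add_self_eq_zero', add_zero]
        _ = u + u := by rw [hcon]
        _ = 0 := add_self_eq_zero' u
    rw [hz] at hip₀
    simp [ip] at hip₀
  · intro u hu
    exact (hBf _).2 (dualSet_add A ((hBf u).1 hu) hu₀)
  · intro u _
    rw [add_assoc, add_self_eq_zero', add_zero]

end Dual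

open Polynomial in
lemma coeff_one_sub_X_pow (m k : ℕ) :
    ((1 - X : Polynomial ℤ) ^ m).coeff k = (-1) ^ k * m.choose k := by
  have h : (1 - X : Polynomial ℤ) ^ m = Polynomial.C ((-1:ℤ)^m) * (X + Polynomial.C (-1)) ^ m := by
    rw [map_pow, ← mul_pow]
    congr 1
    simp only [map_neg, map_one]
    ring
  rw [h, Polynomial.coeff_C_mul, Polynomial.coeff_X_add_C_pow]
  by_cases hk : k ≤ m
  · have : m = (m - k) + k := by omega
    rw [show ((-1:ℤ)^m) = (-1)^(m-k) * (-1)^k by rw [← pow_add, Nat.sub_add_cancel hk]]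
    ring_nf
    rw [show (m-k)*2 = 2*(m-k) by ring, pow_mul]
    norm_num
  · rw [Nat.choose_eq_zero_of_lt (by omega)]
    simp

open Polynomial in
lemma alt_vandermonde (m s : ℕ) :
    ∑ j ∈ Finset.range (2*s+1), (-1:ℤ)^j * m.choose j * m.choose (2*s - j)
      = (-1)^s * m.choose s := by
  have h1 : ((1 - X) ^ m * (1 + X) ^ m : Polynomial ℤ).coeff (2*s)
      = ∑ j ∈ Finset.range (2*s+1), (-1:ℤ)^j * m.choose j * m.choose (2*s - j) := by
    rw [Polynomial.coeff_mul, Finset.Nat.sum_antidiagonal_eq_sum_range_succ_mk]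
    exact Finset.sum_congr rfl fun j _ => by
      rw [coeff_one_sub_X_pow, Polynomial.coeff_one_add_X_pow]
  have h2 : ((1 - X) ^ m * (1 + X) ^ m : Polynomial ℤ)
      = Polynomial.expand ℤ 2 ((1 - X) ^ m) := by
    rw [map_pow, map_sub, map_one, Polynomial.expand_X, ← mul_pow]
    ring
  rw [← h1, h2, Polynomial.coeff_expand (by norm_num : 0 < 2)]
  rw [if_pos ⟨s, by ring⟩]
  rw [show 2 * s / 2 = s by omega, coeff_one_sub_X_pow]

lemma ip_ind (u : Fin n → ZMod 2) (V : Finset (Fin n)) :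
    ip u (ind V) = ((supp u ∩ V).card : ZMod 2) := by
  unfold ip ind
  have h1 : ∀ j : Fin n, u j * (if j ∈ V then 1 else 0)
      = (if j ∈ supp u ∩ V then (1:ZMod 2) else 0) := by
    intro j
    by_cases hV : j ∈ V <;> by_cases hu : u j = 0 <;>
      simp [hV, hu, supp, zmod2_eq_one_of_ne_zero]
  rw [Finset.sum_congr rfl fun j _ => h1 j]
  rw [Finset.sum_ite_mem, Finset.univ_inter, Finset.sum_const, nsmul_eq_mul, mul_one]

lemma L_eval (m i : ℕ) (hn : n = m + m) (V : Finset (Fin n)) (hV : V.card = m) :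
    ∑ s ∈ Finset.powersetCard i (Finset.univ : Finset (Fin n)), (-1:ℤ)^((s ∩ V).card)
      = ∑ j ∈ Finset.range (i+1), (-1:ℤ)^j * m.choose j * m.choose (i - j) := by
  classical
  have step1 : ∑ s ∈ Finset.powersetCard i (Finset.univ : Finset (Fin n)), (-1:ℤ)^((s ∩ V).card)
      = ∑ p ∈ (V.powerset ×ˢ Vᶜ.powerset).filter (fun p => p.1.card + p.2.card = i),
          (-1:ℤ)^(p.1.card) := by
    refine Finset.sum_nbij' (fun s => (s ∩ V, s \ V)) (fun p => p.1 ∪ p.2) ?_ ?_ ?_ ?_ ?_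
    · intro s hs
      rw [Finset.mem_powersetCard] at hs
      simp only [Finset.mem_filter, Finset.mem_product, Finset.mem_powerset]
      refine ⟨⟨Finset.inter_subset_right, fun x hx => ?_⟩, ?_⟩
      · rw [Finset.mem_compl]; exact (Finset.mem_sdiff.1 hx).2
      · rw [Finset.card_inter_add_card_sdiff, hs.2]
    · intro p hp
      simp only [Finset.mem_filter, Finset.mem_product, Finset.mem_powerset] at hp
      rw [Finset.mem_powersetCard]
      refine ⟨Finset.subset_univ _, ?_⟩
      rw [Finset.card_union_of_disjoint
        (Finset.disjoint_left.2 fun x hx1 hx2 => (Finset.mem_compl.1 (hp.1.2 hx2)) (hp.1.1 hx1)),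
        hp.2]
    · intro s _
      ext x
      simp only [Finset.mem_union, Finset.mem_inter, Finset.mem_sdiff]
      tauto
    · intro p hp
      simp only [Finset.mem_filter, Finset.mem_product, Finset.mem_powerset] at hp
      obtain ⟨⟨h1, h2⟩, _⟩ := hp
      have hd : ∀ x ∈ p.2, x ∉ V := fun x hx => Finset.mem_compl.1 (h2 hx)
      have e1 : (p.1 ∪ p.2) ∩ V = p.1 := by
        ext x
        simp only [Finset.mem_inter, Finset.mem_union]
        constructor
        · rintro ⟨hx | hx, hxV⟩
          · exact hx
          · exact absurd hxV (hd x hx)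
        · intro hx; exact ⟨Or.inl hx, h1 hx⟩
      have e2 : (p.1 ∪ p.2) \ V = p.2 := by
        ext x
        simp only [Finset.mem_sdiff, Finset.mem_union]
        constructor
        · rintro ⟨hx | hx, hxV⟩
          · exact absurd (h1 hx) hxV
          · exact hx
        · intro hx; exact ⟨Or.inr hx, hd x hx⟩
      rw [Prod.ext_iff]
      exact ⟨e1, e2⟩
    · intro s _; rfl
  rw [step1]
  rw [← Finset.sum_fiberwise_of_maps_to (g := fun p : Finset (Fin n) × Finset (Fin n) => p.1.card)
      (t := Finset.range (i+1)) (fun p hp => by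
        simp only [Finset.mem_filter] at hp
        have h2 := hp.2
        show p.1.card ∈ Finset.range (i+1)
        exact Finset.mem_range.2 (by omega)) (fun p => (-1:ℤ)^(p.1.card))]
  refine Finset.sum_congr rfl fun j hj => ?_
  have hj' : j ≤ i := Nat.lt_succ_iff.1 (Finset.mem_range.1 hj)
  have hset : (((V.powerset ×ˢ Vᶜ.powerset).filter
        (fun p => p.1.card + p.2.card = i)).filter (fun p => p.1.card = j))
      = Finset.powersetCard j V ×ˢ Finset.powersetCard (i-j) Vᶜ := by
    ext p
    simp only [Finset.mem_filter, Finset.mem_product, Finset.mem_powerset,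
      Finset.mem_powersetCard]
    constructor
    · rintro ⟨⟨⟨h1, h2⟩, h3⟩, h4⟩
      exact ⟨⟨h1, h4⟩, ⟨h2, by omega⟩⟩
    · rintro ⟨⟨h1, h4⟩, ⟨h2, h5⟩⟩
      exact ⟨⟨⟨h1, h2⟩, by omega⟩, h4⟩
  rw [hset]
  rw [Finset.sum_congr rfl (fun p hp => by
    rw [show p.1.card = j from (Finset.mem_powersetCard.1 (Finset.mem_product.1 hp).1).2])]
  rw [Finset.sum_const, Finset.card_product, Finset.card_powersetCard, Finset.card_powersetCard,
    Finset.card_compl, Fintype.card_fin, hV]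
  rw [show n - m = m by omega, nsmul_eq_mul]
  push_cast
  ring

lemma K_pos (m : ℕ) (hn : n = m + m) {u : Fin n → ZMod 2} (h4 : 4 ∣ wt u) :
    0 < ∑ v ∈ W n m, eps (ip u v) := by
  classical
  obtain ⟨t, ht⟩ := h4
  set i := wt u with hi
  have hin : i ≤ n := wt_le u
  have hmn : m ≤ n := by omega
  obtain ⟨V, hVsub, hV⟩ := Finset.exists_subset_card_eq
    (show m ≤ (Finset.univ : Finset (Fin n)).card by simpa using hmn)
  set v₀ := ind V with hv₀
  have hwtv₀ : wt v₀ = m := by rw [hv₀, wt_ind, hV]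
  set K := ∑ v ∈ W n m, eps (ip u v) with hK
  have hdc : ∑ u' ∈ W n i, ∑ v ∈ W n m, eps (ip u' v) = ((W n i).card : ℤ) * K := by
    rw [Finset.sum_congr rfl (fun u' hu' => sum_eps_congr (u := u') (u' := u)
      (by rw [mem_W] at hu'; rw [hu']))]
    rw [Finset.sum_const, nsmul_eq_mul]
  have hL0 : ∀ v ∈ W n m, ∑ u' ∈ W n i, eps (ip u' v) = ∑ u' ∈ W n i, eps (ip u' v₀) := by
    intro v hv
    rw [mem_W] at hv
    calc ∑ u' ∈ W n i, eps (ip u' v) = ∑ u' ∈ W n i, eps (ip v u') :=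
          Finset.sum_congr rfl fun u' _ => by rw [ip_comm]
      _ = ∑ u' ∈ W n i, eps (ip v₀ u') := sum_eps_congr (by rw [hv, hwtv₀])
      _ = ∑ u' ∈ W n i, eps (ip u' v₀) := Finset.sum_congr rfl fun u' _ => by rw [ip_comm]
  have hswap : ∑ u' ∈ W n i, ∑ v ∈ W n m, eps (ip u' v)
      = ((W n m).card : ℤ) * (∑ u' ∈ W n i, eps (ip u' v₀)) := by
    rw [Finset.sum_comm]
    rw [Finset.sum_congr rfl hL0, Finset.sum_const, nsmul_eq_mul]
  have hLval : ∑ u' ∈ W n i, eps (ip u' v₀) = (m.choose (2*t) : ℤ) := by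
    have h1 : ∑ u' ∈ W n i, eps (ip u' v₀)
        = ∑ s ∈ Finset.powersetCard i (Finset.univ : Finset (Fin n)), (-1:ℤ)^((s ∩ V).card) := by
      refine Finset.sum_nbij' (fun u' => supp u') (fun s => ind s) ?_ ?_ ?_ ?_ ?_
      · intro u' hu'
        rw [mem_W] at hu'
        rw [Finset.mem_powersetCard]
        exact ⟨Finset.subset_univ _, by rw [← wt_eq_card_supp, hu']⟩
      · intro s hs
        rw [Finset.mem_powersetCard] at hs
        rw [mem_W, wt_ind, hs.2]
      · intro u' _; exact ind_supp u'
      · intro s _; exact supp_ind s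
      · intro u' _
        rw [hv₀, ip_ind, eps_natCast]
    rw [h1, L_eval m i hn V hV]
    rw [show i = 2 * (2*t) by omega]
    rw [alt_vandermonde m (2*t)]
    rw [show ((-1:ℤ))^(2*t) = 1 by rw [pow_mul]; norm_num]
    rw [one_mul]
  have hkey : ((n.choose i : ℕ) : ℤ) * K = ((n.choose m : ℕ) : ℤ) * (m.choose (2*t) : ℤ) := by
    rw [← card_W (n := n) i, ← card_W (n := n) m, ← hdc, hswap, hLval]
  have hpos1 : 0 < ((n.choose i : ℕ) : ℤ) := by
    exact_mod_cast Nat.choose_pos hin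
  have hpos2 : 0 < ((n.choose m : ℕ) : ℤ) * (m.choose (2*t) : ℤ) := by
    have p1 : 0 < n.choose m := Nat.choose_pos hmn
    have p2 : 0 < m.choose (2*t) := Nat.choose_pos (by omega)
    positivity
  by_contra hcon
  push_neg at hcon
  have : ((n.choose i : ℕ) : ℤ) * K ≤ 0 := mul_nonpos_of_nonneg_of_nonpos (le_of_lt hpos1) hcon
  omega

end CFB


open CFB in
theorem coset_fewer_balanced_of_doubly_even_dual (n : ℕ) (hn : Even n) (hpos : 0 < n)
    (A : Submodule (ZMod 2) (Fin n → ZMod 2))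
    (hdual : ∀ u ∈ dualSet A, 4 ∣ wt u)
    (a : Fin n → ZMod 2) (ha : a ∉ A) :
    {v | (∃ c ∈ A, v = c + a) ∧ wt v = n / 2}.ncard <
      {v | v ∈ A ∧ wt v = n / 2}.ncard := by
  classical
  obtain ⟨m, hm⟩ := hn
  have hn2 : n / 2 = m := by omega
  set Bf : Finset (Fin n → ZMod 2) := Finset.univ.filter (· ∈ dualSet A) with hBfdef
  have hBf : ∀ u, u ∈ Bf ↔ u ∈ dualSet A := fun u => by simp [hBfdef]
  set Kf : (Fin n → ZMod 2) → ℤ := fun u => ∑ v ∈ W n m, eps (ip u v) with hKf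
  have key : ∀ c : Fin n → ZMod 2,
      ((Bf.card : ℤ)) * (((W n m).filter (fun v => v + c ∈ A)).card : ℤ)
        = ∑ u ∈ Bf, eps (ip u c) * Kf u := by
    intro c
    have h1 : ∀ u ∈ Bf, eps (ip u c) * Kf u
        = ∑ v ∈ W n m, eps (ip u (v + c)) := by
      intro u _
      rw [hKf, Finset.mul_sum]
      exact Finset.sum_congr rfl fun v _ => by
        rw [ip_add_right, eps_add]; ring
    rw [Finset.sum_congr rfl h1, Finset.sum_comm]
    have h2 : ∀ v ∈ W n m, ∑ u ∈ Bf, eps (ip u (v + c))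
        = if v + c ∈ A then (Bf.card : ℤ) else 0 := by
      intro v _
      by_cases hvc : v + c ∈ A
      · rw [if_pos hvc, sum_eps_ip_mem A Bf hBf hvc]
      · rw [if_neg hvc, sum_eps_ip_notMem A Bf hBf hvc]
    rw [Finset.sum_congr rfl h2, Finset.sum_ite, Finset.sum_const_zero, add_zero,
      Finset.sum_const, nsmul_eq_mul]
    ring
  have key0 : ((Bf.card : ℤ)) * (((W n m).filter (fun v => v + 0 ∈ A)).card : ℤ)
      = ∑ u ∈ Bf, Kf u := by
    rw [key 0]
    refine Finset.sum_congr rfl fun u _ => ?_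
    have : ip u 0 = 0 := by simp [ip]
    rw [this, eps_zero, one_mul]
  have hdiff : ((Bf.card : ℤ)) * (((W n m).filter (fun v => v + 0 ∈ A)).card : ℤ)
      - ((Bf.card : ℤ)) * (((W n m).filter (fun v => v + a ∈ A)).card : ℤ)
      = ∑ u ∈ Bf, (1 - eps (ip u a)) * Kf u := by
    rw [key0, key a, ← Finset.sum_sub_distrib]
    exact Finset.sum_congr rfl fun u _ => by ring
  have hKpos : ∀ u ∈ Bf, 0 < Kf u := by
    intro u hu
    exact K_pos m hm (hdual u ((hBf u).1 hu))
  have hterm_nonneg : ∀ u ∈ Bf, 0 ≤ (1 - eps (ip u a)) * Kf u := by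
    intro u hu
    by_cases h : ip u a = 0
    · rw [h, eps_zero]; simp
    · rw [zmod2_eq_one_of_ne_zero h, show eps 1 = -1 from rfl]
      have := hKpos u hu
      nlinarith
  obtain ⟨u₀, hu₀d, hip₀⟩ := exists_dual A ha
  have hu₀ : u₀ ∈ Bf := (hBf u₀).2 hu₀d
  have hterm_pos : 0 < (1 - eps (ip u₀ a)) * Kf u₀ := by
    rw [hip₀, show eps 1 = -1 from rfl]
    have := hKpos u₀ hu₀
    nlinarith
  have hsumpos : 0 < ∑ u ∈ Bf, (1 - eps (ip u a)) * Kf u :=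
    Finset.sum_pos' hterm_nonneg ⟨u₀, hu₀, hterm_pos⟩
  have hcard_lt : (((W n m).filter (fun v => v + a ∈ A)).card : ℤ)
      < (((W n m).filter (fun v => v + 0 ∈ A)).card : ℤ) := by
    rw [← hdiff] at hsumpos
    have hBpos : 0 < (Bf.card : ℤ) := by
      have : (0 : Fin n → ZMod 2) ∈ Bf := (hBf 0).2 (dualSet_zero A)
      exact_mod_cast Finset.card_pos.2 ⟨0, this⟩
    nlinarith
  have hset1 : {v | (∃ c ∈ A, v = c + a) ∧ wt v = n / 2}
      = ↑((W n m).filter (fun v => v + a ∈ A)) := by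
    ext v
    simp only [Set.mem_setOf_eq, Finset.coe_filter, Finset.mem_filter, mem_W, hn2]
    constructor
    · rintro ⟨⟨c, hc, rfl⟩, hw⟩
      refine ⟨hw, ?_⟩
      rw [add_assoc, add_self_eq_zero', add_zero]
      exact hc
    · rintro ⟨hw, hv⟩
      exact ⟨⟨v + a, hv, by rw [add_assoc, add_self_eq_zero', add_zero]⟩, hw⟩
  have hset2 : {v | v ∈ A ∧ wt v = n / 2}
      = ↑((W n m).filter (fun v => v + 0 ∈ A)) := by
    ext v
    simp only [Set.mem_setOf_eq, Finset.coe_filter, Finset.mem_filter, mem_W, hn2, add_zero]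
    tauto
  rw [hset1, hset2, Set.ncard_coe_finset, Set.ncard_coe_finset]
  exact_mod_cast hcard_lt
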